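/- Let A_{m,n} = aᵐ(a⁺)ⁿ acting on the rescaled Hermite basis H_μ, so that A_{m,n} H_μ = ħ^{(m+n)/2} √((μ+1)⋯(μ+n)·(μ+n)(μ+n−1)⋯(μ+n−m+1)) H_{μ+n−m}. If a finite linear combination Σ c_{mn} A_{m,n} satisfies ‖Σ c_{mn}A_{m,n} H_μ‖ = O((μħ)^N) for every N (uniformly as μħ stays bounded away from issues, i.e., O((μħ)^∞)), then all coefficients c_{mn} vanish. -/

import Mathlib

set_option maxHeartbeats 1000000


/-- if a finite linear combination Σ c_{mn} A_{m,n} of words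
A_{m,n} = aᵐ(a⁺)ⁿ, with A_{m,n}H_μ = ℏ^{(m+n)/2}√((μ+1)⋯(μ+n)·(μ+n)⋯(μ+n−m+1)) H_{μ+n−m},
satisfies ‖Σ c_{mn}A_{m,n}H_μ‖ = O((μℏ)^N) for every N, then all c_{mn} = 0. -/
theorem stmt_6 {E : Type*} [NormedAddCommGroup E] [InnerProductSpace ℂ E]
    (ℏ : ℝ) (hℏ : 0 < ℏ) (H : ℕ → E) (hH : Orthonormal ℂ H)
    (S : Finset (ℕ × ℕ)) (c : ℕ × ℕ → ℂ)
    (coef : ℕ → ℕ → ℕ → ℝ)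
    (hcoef : ∀ m n μ : ℕ, coef m n μ =
      Real.sqrt (ℏ ^ (m + n) * (∏ j ∈ Finset.range n, ((μ : ℝ) + 1 + (j : ℝ))) *
        (∏ j ∈ Finset.range m, ((μ + n - j : ℕ) : ℝ))))
    (hbound : ∀ N : ℕ, ∃ C : ℝ, ∀ μ : ℕ,
      ‖∑ p ∈ S, c p • (((coef p.1 p.2 μ : ℝ) : ℂ) • H (μ + p.2 - p.1))‖
        ≤ C * ((μ : ℝ) * ℏ) ^ N) :
    ∀ p ∈ S, c p = 0 := by
  obtain ⟨C, hC⟩ := hbound 0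
  simp only [pow_zero, mul_one] at hC
  have coef_nonneg : ∀ m n μ : ℕ, 0 ≤ coef m n μ := by
    intro m n μ; rw [hcoef]; exact Real.sqrt_nonneg _
  have hCpos : (0:ℝ) ≤ C := le_trans (norm_nonneg _) (hC 0)
  obtain ⟨M, hM⟩ : ∃ M : ℕ, M = S.sup (fun p => p.1 + p.2) + 1 := ⟨_, rfl⟩
  have hMS : ∀ p ∈ S, p.1 + p.2 < M := by
    intro p hp
    rw [hM]
    exact Nat.lt_succ_of_le (Finset.le_sup (f := fun p => p.1 + p.2) hp)
  have hM1 : 1 ≤ M := by omega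
  obtain ⟨K, hK⟩ : ∃ K : ℝ, K = ∑ p ∈ S, ‖c p‖ := ⟨_, rfl⟩
  have hKnn : (0:ℝ) ≤ K := hK ▸ Finset.sum_nonneg (fun _ _ => norm_nonneg _)
  -- the inner-product extraction, valid for any μ ≥ M and any q ∈ S
  have extract : ∀ (q : ℕ × ℕ), q ∈ S → ∀ μ : ℕ, M ≤ μ →
      ‖∑ p ∈ S.filter (fun p => (p.2:ℤ) - (p.1:ℤ) = (q.2:ℤ) - (q.1:ℤ)),
          (c p * ((coef p.1 p.2 μ : ℝ) : ℂ))‖ ≤ C := by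
    intro q hqS μ hμ
    have hinner : (inner ℂ (H (μ + q.2 - q.1))
        (∑ p ∈ S, c p • (((coef p.1 p.2 μ : ℝ) : ℂ) • H (μ + p.2 - p.1))) : ℂ)
        = ∑ p ∈ S.filter (fun p => (p.2:ℤ) - (p.1:ℤ) = (q.2:ℤ) - (q.1:ℤ)),
          (c p * ((coef p.1 p.2 μ : ℝ) : ℂ)) := by
      rw [inner_sum]
      rw [Finset.sum_filter]
      apply Finset.sum_congr rfl
      intro p hp
      rw [inner_smul_right, inner_smul_right, orthonormal_iff_ite.mp hH]
      have hpm : p.1 + p.2 < M := hMS p hp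
      have hqm : q.1 + q.2 < M := hMS q hqS
      by_cases hcond : (p.2:ℤ) - (p.1:ℤ) = (q.2:ℤ) - (q.1:ℤ)
      · rw [if_pos hcond, if_pos (by omega), mul_one]
      · rw [if_neg hcond, if_neg (by omega), mul_zero, mul_zero]
    calc ‖∑ p ∈ S.filter (fun p => (p.2:ℤ) - (p.1:ℤ) = (q.2:ℤ) - (q.1:ℤ)),
          (c p * ((coef p.1 p.2 μ : ℝ) : ℂ))‖
        = ‖(inner ℂ (H (μ + q.2 - q.1))
            (∑ p ∈ S, c p • (((coef p.1 p.2 μ : ℝ) : ℂ) • H (μ + p.2 - p.1))) : ℂ)‖ := by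
          rw [hinner]
      _ ≤ ‖H (μ + q.2 - q.1)‖ * ‖∑ p ∈ S, c p • (((coef p.1 p.2 μ : ℝ) : ℂ) • H (μ + p.2 - p.1))‖ :=
          norm_inner_le_norm _ _
      _ ≤ 1 * C := by
          apply mul_le_mul (le_of_eq (hH.1 _)) (hC μ) (norm_nonneg _) zero_le_one
      _ = C := one_mul C
  -- Step 1: all coefficients with p ≠ (0,0) vanish
  have step1 : ∀ p ∈ S, p ≠ (0,0) → c p = 0 := by
    intro p₁ hp₁ hp₁ne
    by_contra hc1
    obtain ⟨q, hqT, hqmax⟩ := Finset.exists_max_image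
      (S.filter (fun p => (p.2:ℤ) - (p.1:ℤ) = (p₁.2:ℤ) - (p₁.1:ℤ) ∧ c p ≠ 0))
      (fun p => p.1 + p.2) ⟨p₁, by simp [hp₁, hc1]⟩
    obtain ⟨hqS, hqd, hcq⟩ : q ∈ S ∧ ((q.2:ℤ) - (q.1:ℤ) = (p₁.2:ℤ) - (p₁.1:ℤ)) ∧ c q ≠ 0 := by
      simpa using hqT
    obtain ⟨D, hD⟩ : ∃ D : ℕ, D = q.1 + q.2 := ⟨_, rfl⟩
    have hD1 : 1 ≤ D := by
      have h1 : p₁.1 + p₁.2 ≤ q.1 + q.2 := hqmax p₁ (by simp [hp₁, hc1])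
      have h2 : p₁.1 + p₁.2 ≠ 0 := by
        intro h
        exact hp₁ne (Prod.ext (by omega) (by omega))
      omega
    have hcqpos : (0:ℝ) < ‖c q‖ := norm_pos_iff.mpr hcq
    obtain ⟨β, hβ⟩ : ∃ β : ℝ, β = Real.sqrt (3*(ℏ+1)/ℏ) := ⟨_, rfl⟩
    have hβnn : (0:ℝ) ≤ β := hβ ▸ Real.sqrt_nonneg _
    obtain ⟨B, hB⟩ : ∃ B : ℝ, B = (C + K * β^(D-1)) / ‖c q‖ := ⟨_, rfl⟩
    have hBnn : (0:ℝ) ≤ B := by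
      rw [hB]
      exact div_nonneg (add_nonneg hCpos (mul_nonneg hKnn (pow_nonneg hβnn _))) hcqpos.le
    obtain ⟨μ₀, hμ₀⟩ : ∃ μ₀ : ℕ, μ₀ = 2*M + ⌈(B^2+1)/ℏ⌉₊ := ⟨_, rfl⟩
    have hμ₀M : 2*M ≤ μ₀ := by rw [hμ₀]; exact Nat.le_add_right _ _
    have hμ₀Mr : 2*(M:ℝ) ≤ (μ₀:ℝ) := by exact_mod_cast hμ₀M
    have hMr1 : (1:ℝ) ≤ (M:ℝ) := by exact_mod_cast hM1
    have hs2 : B^2 + 1 ≤ ℏ * ((μ₀:ℝ) - M) := by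
      have h1 : (B^2+1)/ℏ ≤ ((⌈(B^2+1)/ℏ⌉₊ : ℕ) : ℝ) := Nat.le_ceil _
      have h2 : ((⌈(B^2+1)/ℏ⌉₊ : ℕ) : ℝ) ≤ (μ₀:ℝ) - M := by
        have h3 : ((⌈(B^2+1)/ℏ⌉₊ : ℕ) : ℝ) + M ≤ (μ₀:ℝ) := by
          rw [hμ₀]; push_cast; linarith
        linarith
      calc B^2+1 = ℏ * ((B^2+1)/ℏ) := by field_simp
        _ ≤ ℏ * ((μ₀:ℝ) - M) := mul_le_mul_of_nonneg_left (h1.trans h2) hℏ.le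
    have hs2pos : (0:ℝ) < ℏ * ((μ₀:ℝ) - M) := by nlinarith [sq_nonneg B]
    obtain ⟨s, hsdef⟩ : ∃ s : ℝ, s = Real.sqrt (ℏ * ((μ₀:ℝ) - M)) := ⟨_, rfl⟩
    obtain ⟨t, htdef⟩ : ∃ t : ℝ, t = Real.sqrt ((ℏ+1) * ((μ₀:ℝ) + M)) := ⟨_, rfl⟩
    have hs_sq : s^2 = ℏ * ((μ₀:ℝ) - M) := hsdef ▸ Real.sq_sqrt hs2pos.le
    have ht2pos : (0:ℝ) ≤ (ℏ+1) * ((μ₀:ℝ) + M) := by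
      apply mul_nonneg (by linarith) (by positivity)
    have ht_sq : t^2 = (ℏ+1) * ((μ₀:ℝ) + M) := htdef ▸ Real.sq_sqrt ht2pos
    have hs_nn : 0 ≤ s := hsdef ▸ Real.sqrt_nonneg _
    have ht_nn : 0 ≤ t := htdef ▸ Real.sqrt_nonneg _
    have hs1 : (1:ℝ) ≤ s := by
      rw [hsdef]
      have h := Real.sqrt_le_sqrt (show (1:ℝ) ≤ ℏ * ((μ₀:ℝ) - M) by nlinarith [sq_nonneg B])
      rwa [Real.sqrt_one] at h
    have ht1 : (1:ℝ) ≤ t := by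
      rw [htdef]
      have h := Real.sqrt_le_sqrt (show (1:ℝ) ≤ (ℏ+1) * ((μ₀:ℝ) + M) by nlinarith)
      rwa [Real.sqrt_one] at h
    -- product expansion helper
    have expand : ∀ (m n μ : ℕ),
        ℏ ^ (m + n) * (∏ j ∈ Finset.range n, ((μ : ℝ) + 1 + (j : ℝ))) *
          (∏ j ∈ Finset.range m, ((μ + n - j : ℕ) : ℝ)) =
        (∏ j ∈ Finset.range n, (ℏ * ((μ : ℝ) + 1 + (j : ℝ)))) *
          (∏ j ∈ Finset.range m, (ℏ * ((μ + n - j : ℕ) : ℝ))) := by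
      intro m n μ
      rw [Finset.prod_mul_distrib, Finset.prod_mul_distrib, Finset.prod_const,
        Finset.prod_const, Finset.card_range, Finset.card_range]
      ring
    have fac_nn : ∀ (x : ℝ), 0 ≤ x → 0 ≤ ℏ * x := fun x hx => mul_nonneg hℏ.le hx
    -- upper bound for coef
    have coef_upper : ∀ p ∈ S, coef p.1 p.2 μ₀ ≤ t ^ (p.1 + p.2) := by
      intro p hp
      have hpm : p.1 + p.2 < M := hMS p hp
      rw [hcoef, expand]
      have h1 : (∏ j ∈ Finset.range p.2, (ℏ * ((μ₀ : ℝ) + 1 + (j : ℝ)))) ≤ (t^2) ^ p.2 := by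
        calc (∏ j ∈ Finset.range p.2, (ℏ * ((μ₀ : ℝ) + 1 + (j : ℝ))))
            ≤ ∏ _j ∈ Finset.range p.2, t^2 := by
              apply Finset.prod_le_prod (fun j _ => fac_nn _ (by positivity))
              intro j hj
              rw [ht_sq]
              have hj2 : (j:ℝ) + 1 ≤ (M:ℝ) := by
                have : j + 1 ≤ M := by
                  have := Finset.mem_range.mp hj; omega
                exact_mod_cast this
              nlinarith [Nat.cast_nonneg (α := ℝ) μ₀]
          _ = (t^2) ^ p.2 := by simp
      have h2 : (∏ j ∈ Finset.range p.1, (ℏ * ((μ₀ + p.2 - j : ℕ) : ℝ))) ≤ (t^2) ^ p.1 := by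
        calc (∏ j ∈ Finset.range p.1, (ℏ * ((μ₀ + p.2 - j : ℕ) : ℝ)))
            ≤ ∏ _j ∈ Finset.range p.1, t^2 := by
              apply Finset.prod_le_prod (fun j _ => fac_nn _ (Nat.cast_nonneg _))
              intro j hj
              rw [ht_sq]
              have hj2 : ((μ₀ + p.2 - j : ℕ) : ℝ) ≤ (μ₀:ℝ) + M := by
                have : μ₀ + p.2 - j ≤ μ₀ + M := by omega
                exact_mod_cast this
              nlinarith [Nat.cast_nonneg (α := ℝ) (μ₀ + p.2 - j)]
          _ = (t^2) ^ p.1 := by simp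
      have h3 : (∏ j ∈ Finset.range p.2, (ℏ * ((μ₀ : ℝ) + 1 + (j : ℝ)))) *
          (∏ j ∈ Finset.range p.1, (ℏ * ((μ₀ + p.2 - j : ℕ) : ℝ))) ≤ (t ^ (p.1+p.2))^2 := by
        calc (∏ j ∈ Finset.range p.2, (ℏ * ((μ₀ : ℝ) + 1 + (j : ℝ)))) *
            (∏ j ∈ Finset.range p.1, (ℏ * ((μ₀ + p.2 - j : ℕ) : ℝ)))
            ≤ (t^2)^p.2 * (t^2)^p.1 := by
              apply mul_le_mul h1 h2
                (Finset.prod_nonneg (fun j _ => fac_nn _ (Nat.cast_nonneg _)))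
                (pow_nonneg (sq_nonneg t) _)
          _ = (t ^ (p.1+p.2))^2 := by ring
      have h4 := Real.sqrt_le_sqrt h3
      rwa [Real.sqrt_sq (pow_nonneg ht_nn _)] at h4
    -- lower bound for coef q
    have coef_lower : s ^ D ≤ coef q.1 q.2 μ₀ := by
      have hqm : q.1 + q.2 < M := hMS q hqS
      rw [hcoef, expand]
      have h1 : (s^2) ^ q.2 ≤ (∏ j ∈ Finset.range q.2, (ℏ * ((μ₀ : ℝ) + 1 + (j : ℝ)))) := by
        calc (s^2) ^ q.2 = ∏ _j ∈ Finset.range q.2, s^2 := by simp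
          _ ≤ _ := by
              apply Finset.prod_le_prod (fun j _ => by rw [hs_sq]; exact hs2pos.le)
              intro j _
              rw [hs_sq]
              have : (0:ℝ) ≤ (j:ℝ) := Nat.cast_nonneg _
              nlinarith
      have h2 : (s^2) ^ q.1 ≤ (∏ j ∈ Finset.range q.1, (ℏ * ((μ₀ + q.2 - j : ℕ) : ℝ))) := by
        calc (s^2) ^ q.1 = ∏ _j ∈ Finset.range q.1, s^2 := by simp
          _ ≤ _ := by
              apply Finset.prod_le_prod (fun j _ => by rw [hs_sq]; exact hs2pos.le)
              intro j hj
              rw [hs_sq]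
              have hj1 : j < q.1 := Finset.mem_range.mp hj
              have hcast : ((μ₀ - M : ℕ):ℝ) ≤ ((μ₀ + q.2 - j : ℕ) : ℝ) := by
                have : μ₀ - M ≤ μ₀ + q.2 - j := by omega
                exact_mod_cast this
              have hcast2 : ((μ₀ - M : ℕ):ℝ) = (μ₀:ℝ) - M := by
                have hMμ : M ≤ μ₀ := by omega
                push_cast [hMμ]; ring
              nlinarith [hcast, hcast2]
      have h3 : (s ^ D)^2 ≤ (∏ j ∈ Finset.range q.2, (ℏ * ((μ₀ : ℝ) + 1 + (j : ℝ)))) *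
          (∏ j ∈ Finset.range q.1, (ℏ * ((μ₀ + q.2 - j : ℕ) : ℝ))) := by
        have he : (s ^ D)^2 = (s^2)^q.2 * (s^2)^q.1 := by rw [hD]; ring
        rw [he]
        apply mul_le_mul h1 h2 (pow_nonneg (sq_nonneg s) _)
          (Finset.prod_nonneg (fun j _ => fac_nn _ (by positivity)))
      have h4 := Real.sqrt_le_sqrt h3
      rwa [Real.sqrt_sq (pow_nonneg hs_nn _)] at h4
    -- the main estimate
    have hMμ₀ : M ≤ μ₀ := by omega
    have hext := extract q hqS μ₀ hMμ₀
    have hqfil : q ∈ S.filter (fun p => (p.2:ℤ) - (p.1:ℤ) = (q.2:ℤ) - (q.1:ℤ)) := by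
      simp [hqS]
    have hsplit := Finset.add_sum_erase _
      (fun p => (c p * ((coef p.1 p.2 μ₀ : ℝ) : ℂ))) hqfil
    -- ‖c q‖ * coef q ≤ C + K * t^(D-1)
    have herase : ‖∑ p ∈ (S.filter (fun p => (p.2:ℤ) - (p.1:ℤ) = (q.2:ℤ) - (q.1:ℤ))).erase q,
        (c p * ((coef p.1 p.2 μ₀ : ℝ) : ℂ))‖ ≤ K * t^(D-1) := by
      calc ‖∑ p ∈ (S.filter (fun p => (p.2:ℤ) - (p.1:ℤ) = (q.2:ℤ) - (q.1:ℤ))).erase q,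
          (c p * ((coef p.1 p.2 μ₀ : ℝ) : ℂ))‖
          ≤ ∑ p ∈ (S.filter (fun p => (p.2:ℤ) - (p.1:ℤ) = (q.2:ℤ) - (q.1:ℤ))).erase q,
            ‖(c p * ((coef p.1 p.2 μ₀ : ℝ) : ℂ))‖ := norm_sum_le _ _
        _ ≤ ∑ p ∈ (S.filter (fun p => (p.2:ℤ) - (p.1:ℤ) = (q.2:ℤ) - (q.1:ℤ))).erase q,
            ‖c p‖ * t^(D-1) := by
            apply Finset.sum_le_sum
            intro p hp
            have hpe := Finset.mem_of_mem_erase hp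
            have hpS : p ∈ S := Finset.mem_of_mem_filter _ hpe
            have hpd : (p.2:ℤ) - (p.1:ℤ) = (q.2:ℤ) - (q.1:ℤ) := by
              simpa using (Finset.mem_filter.mp hpe).2
            have hpq : p ≠ q := Finset.ne_of_mem_erase hp
            rw [norm_mul, Complex.norm_real, Real.norm_eq_abs,
              abs_of_nonneg (coef_nonneg _ _ _)]
            by_cases hcp : c p = 0
            · simp [hcp]
            · apply mul_le_mul_of_nonneg_left _ (norm_nonneg _)
              have hpT : p ∈ S.filter
                  (fun p => (p.2:ℤ) - (p.1:ℤ) = (p₁.2:ℤ) - (p₁.1:ℤ) ∧ c p ≠ 0) := by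
                simp only [Finset.mem_filter]
                exact ⟨hpS, by rw [hpd, hqd], hcp⟩
              have hdeg : p.1 + p.2 ≤ D := hD ▸ hqmax p hpT
              have hdegne : p.1 + p.2 ≠ D := by
                intro h
                apply hpq
                rw [hD] at h
                exact Prod.ext (by omega) (by omega)
              have hdeg1 : p.1 + p.2 ≤ D - 1 := by omega
              calc coef p.1 p.2 μ₀ ≤ t ^ (p.1 + p.2) := coef_upper p hpS
                _ ≤ t ^ (D-1) := pow_le_pow_right₀ ht1 hdeg1
        _ = (∑ p ∈ (S.filter (fun p => (p.2:ℤ) - (p.1:ℤ) = (q.2:ℤ) - (q.1:ℤ))).erase q,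
            ‖c p‖) * t^(D-1) := (Finset.sum_mul _ _ _).symm
        _ ≤ K * t^(D-1) := by
            apply mul_le_mul_of_nonneg_right _ (pow_nonneg ht_nn _)
            rw [hK]
            apply Finset.sum_le_sum_of_subset_of_nonneg
            · intro x hx
              exact Finset.mem_of_mem_filter _ (Finset.mem_of_mem_erase hx)
            · intro _ _ _; exact norm_nonneg _
    have hmain : ‖c q‖ * coef q.1 q.2 μ₀ ≤ C + K * t^(D-1) := by
      have h1 : ‖c q * ((coef q.1 q.2 μ₀ : ℝ) : ℂ)‖
          ≤ ‖∑ p ∈ S.filter (fun p => (p.2:ℤ) - (p.1:ℤ) = (q.2:ℤ) - (q.1:ℤ)),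
              (c p * ((coef p.1 p.2 μ₀ : ℝ) : ℂ))‖
            + ‖∑ p ∈ (S.filter (fun p => (p.2:ℤ) - (p.1:ℤ) = (q.2:ℤ) - (q.1:ℤ))).erase q,
              (c p * ((coef p.1 p.2 μ₀ : ℝ) : ℂ))‖ := by
        have : c q * ((coef q.1 q.2 μ₀ : ℝ) : ℂ)
            = (∑ p ∈ S.filter (fun p => (p.2:ℤ) - (p.1:ℤ) = (q.2:ℤ) - (q.1:ℤ)),
              (c p * ((coef p.1 p.2 μ₀ : ℝ) : ℂ)))
            - ∑ p ∈ (S.filter (fun p => (p.2:ℤ) - (p.1:ℤ) = (q.2:ℤ) - (q.1:ℤ))).erase q,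
              (c p * ((coef p.1 p.2 μ₀ : ℝ) : ℂ)) := by
          rw [← hsplit]; ring
        rw [this]
        exact norm_sub_le _ _
      have h2 : ‖c q * ((coef q.1 q.2 μ₀ : ℝ) : ℂ)‖ = ‖c q‖ * coef q.1 q.2 μ₀ := by
        rw [norm_mul, Complex.norm_real, Real.norm_eq_abs, abs_of_nonneg (coef_nonneg _ _ _)]
      rw [h2] at h1
      linarith [hext, herase, h1]
    -- now put everything together
    have htβs : t ≤ β * s := by
      have hβs_sq : (β*s)^2 = 3*(ℏ+1)/ℏ * (ℏ * ((μ₀:ℝ) - M)) := by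
        rw [mul_pow, hs_sq, hβ, Real.sq_sqrt (by positivity)]
      have hts : t^2 ≤ (β*s)^2 := by
        rw [ht_sq, hβs_sq]
        have he : 3*(ℏ+1)/ℏ * (ℏ * ((μ₀:ℝ) - M)) = 3*(ℏ+1)*((μ₀:ℝ) - M) := by
          field_simp
        rw [he]
        nlinarith
      have h := Real.sqrt_le_sqrt hts
      rwa [Real.sqrt_sq ht_nn, Real.sqrt_sq (mul_nonneg hβnn hs_nn)] at h
    have hspos : (0:ℝ) < s := lt_of_lt_of_le one_pos hs1
    have hsD1 : (1:ℝ) ≤ s^(D-1) := one_le_pow₀ hs1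
    have hfinal : ‖c q‖ * s ^ D ≤ (C + K * β^(D-1)) * s^(D-1) := by
      have hstep : ‖c q‖ * s ^ D ≤ C + K * t^(D-1) :=
        le_trans (mul_le_mul_of_nonneg_left coef_lower (norm_nonneg _)) hmain
      have ht' : t^(D-1) ≤ β^(D-1) * s^(D-1) := by
        calc t^(D-1) ≤ (β*s)^(D-1) := pow_le_pow_left₀ ht_nn htβs _
          _ = β^(D-1) * s^(D-1) := mul_pow _ _ _
      have e1 : C ≤ C * s^(D-1) := le_mul_of_one_le_right hCpos hsD1
      have e2 : K * t^(D-1) ≤ K * (β^(D-1) * s^(D-1)) := mul_le_mul_of_nonneg_left ht' hKnn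
      calc ‖c q‖ * s^D ≤ C + K*t^(D-1) := hstep
        _ ≤ C*s^(D-1) + K*(β^(D-1)*s^(D-1)) := add_le_add e1 e2
        _ = (C + K*β^(D-1)) * s^(D-1) := by ring
    have hsD : s^D = s^(D-1) * s := by
      rw [← pow_succ]
      congr 1
      omega
    have hspow : (0:ℝ) < s^(D-1) := pow_pos hspos _
    have h6 : ‖c q‖ * s ≤ C + K*β^(D-1) := by
      have h5 : (‖c q‖ * s) * s^(D-1) ≤ (C + K*β^(D-1)) * s^(D-1) := by
        calc (‖c q‖ * s) * s^(D-1) = ‖c q‖ * s^D := by rw [hsD]; ring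
          _ ≤ (C + K*β^(D-1)) * s^(D-1) := hfinal
      exact le_of_mul_le_mul_right h5 hspow
    have h7 : s ≤ B := by
      rw [hB, le_div_iff₀ hcqpos]
      linarith
    have h8 : s^2 ≤ B^2 := by
      apply pow_le_pow_left₀ hs_nn h7
    rw [hs_sq] at h8
    linarith
  -- Step 2: the (0,0) coefficient
  intro p hp
  by_cases hp00 : p = (0,0)
  · obtain ⟨C₁, hC₁⟩ := hbound 1
    have h0 := hC₁ 0
    simp only [Nat.cast_zero, zero_mul, pow_one, mul_zero] at h0
    have hsum : (∑ p' ∈ S, c p' • (((coef p'.1 p'.2 0 : ℝ) : ℂ) • H (0 + p'.2 - p'.1)))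
        = c p • (((coef p.1 p.2 0 : ℝ) : ℂ) • H (0 + p.2 - p.1)) := by
      apply Finset.sum_eq_single_of_mem p hp
      intro b hb hbp
      rw [step1 b hb (fun h => hbp (h.trans hp00.symm)), zero_smul]
    rw [hsum] at h0
    have hcoef00 : coef p.1 p.2 0 = 1 := by
      rw [hp00, hcoef]
      simp
    rw [hcoef00] at h0
    simp only [Complex.ofReal_one, one_smul, norm_smul] at h0
    have hnH : ‖H (0 + p.2 - p.1)‖ = 1 := hH.1 _
    rw [hnH, mul_one] at h0
    exact norm_le_zero_iff.mp h0
  · exact step1 p hp hp00
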